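/- For a dynamic mixture of finite mixtures with gamma_K = alpha/K, the exchangeable partition probability function factorizes as p(C | N, alpha) = p_DP(C | N, alpha) * sum_{K = K_+}^infinity p(K) * R_{N,K_+}^{K,alpha}, where p_DP(C | N, alpha) = alpha^{K_+} Gamma(alpha)/Gamma(alpha + N) * prod_{j=1}^{K_+} Gamma(N_j) is the Ewens distribution and R_{N,K_+}^{K,alpha} = prod_{j=1}^{K_+} [Gamma(N_j + alpha/K) (K - j + 1)] / [Gamma(1 + alpha/K) Gamma(N_j) K]. -/

import Mathlib

open Finset

/-- For a dynamic MFM with `γ_K = α/K`, the EPPF factorizes as the Ewens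
distribution times `∑_{K ≥ K_+} p(K) R_{N,K_+}^{K,α}`. -/
theorem dynamic_MFM_EPPF_factorization (N Kp : ℕ) (hKp : 0 < Kp) (α : ℝ) (hα : 0 < α)
    (Nj : Fin Kp → ℕ) (hNj : ∀ j, 0 < Nj j) (hsum : ∑ j, Nj j = N)
    (p : ℕ → ℝ) (hp : ∀ K, 0 ≤ p K) (hp0 : p 0 = 0) (hps : ∑' K : ℕ, p K = 1) :
    (∑' K : ℕ, if Kp ≤ K then
        p K * ((Real.Gamma ((α / K) * K) * (Nat.factorial K : ℝ)) /
            (Real.Gamma ((α / K) * K + N) * (Nat.factorial (K - Kp) : ℝ))) /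
          (Real.Gamma (α / K)) ^ Kp * ∏ j, Real.Gamma ((Nj j : ℝ) + α / K)
      else 0)
    = (α ^ Kp * Real.Gamma α / Real.Gamma (α + N) * ∏ j, Real.Gamma (Nj j)) *
        (∑' K : ℕ, if Kp ≤ K then
            p K * ∏ j : Fin Kp,
              (Real.Gamma ((Nj j : ℝ) + α / K) * ((K : ℝ) - j)) /
                (Real.Gamma (1 + α / K) * Real.Gamma (Nj j) * K)
          else 0) := by
  rw [← tsum_mul_left]
  apply tsum_congr
  intro K
  by_cases hK : Kp ≤ K
  · simp only [hK, if_true]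
    have hKpos : 0 < K := lt_of_lt_of_le hKp hK
    have hK0 : (K : ℝ) ≠ 0 := Nat.cast_ne_zero.mpr hKpos.ne'
    have haK : α / K ≠ 0 := div_ne_zero hα.ne' hK0
    have haKpos : 0 < α / K := div_pos hα (Nat.cast_pos.mpr hKpos)
    rw [div_mul_cancel₀ α hK0]
    have hprod : ∏ j : Fin Kp, ((K : ℝ) - (j : ℕ)) =
        (K.factorial : ℝ) / ((K - Kp).factorial : ℝ) := by
      have h1 : K.descFactorial Kp = ∏ j ∈ range Kp, (K - j) :=
        Nat.descFactorial_eq_prod_range K Kp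
      have h2 : (K.descFactorial Kp : ℝ) = (K.factorial : ℝ) / ((K - Kp).factorial : ℝ) := by
        rw [Nat.descFactorial_eq_div hK,
          Nat.cast_div (Nat.factorial_dvd_factorial (Nat.sub_le K Kp))
            (Nat.cast_ne_zero.mpr (Nat.factorial_ne_zero _))]
      rw [← h2, h1, Nat.cast_prod, ← Fin.prod_univ_eq_prod_range (fun j => ((K - j : ℕ) : ℝ))]
      apply Finset.prod_congr rfl
      intro j _
      have : (j : ℕ) < K := lt_of_lt_of_le j.isLt hK
      push_cast [Nat.cast_sub this.le]
      ring
    have hG1 : Real.Gamma (1 + α / K) = (α / K) * Real.Gamma (α / K) := by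
      rw [add_comm, Real.Gamma_add_one haK]
    have hΓαN : Real.Gamma (α + N) ≠ 0 :=
      (Real.Gamma_pos_of_pos (by positivity)).ne'
    have hΓαK : Real.Gamma (α / K) ≠ 0 := (Real.Gamma_pos_of_pos haKpos).ne'
    have hΓNj : ∀ j : Fin Kp, Real.Gamma (Nj j) ≠ 0 := fun j =>
      (Real.Gamma_pos_of_pos (by exact_mod_cast hNj j)).ne'
    have hfac : ((K - Kp).factorial : ℝ) ≠ 0 := Nat.cast_ne_zero.mpr (Nat.factorial_ne_zero _)
    rw [hG1]
    have key : (∏ j : Fin Kp, (Real.Gamma ((Nj j : ℝ) + α / K) * ((K : ℝ) - j)) /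
          ((α / K * Real.Gamma (α / K)) * Real.Gamma (Nj j) * K))
        = ((∏ j : Fin Kp, Real.Gamma ((Nj j : ℝ) + α / K)) *
            ((K.factorial : ℝ) / ((K - Kp).factorial : ℝ))) /
          ((α / K * Real.Gamma (α / K)) ^ Kp * (∏ j : Fin Kp, Real.Gamma (Nj j)) * (K : ℝ) ^ Kp) := by
      rw [Finset.prod_div_distrib, Finset.prod_mul_distrib, hprod,
        Finset.prod_mul_distrib, Finset.prod_mul_distrib, Finset.prod_const,
        Finset.prod_const]
      simp
    rw [key]
    have hD : (∏ j : Fin Kp, Real.Gamma (Nj j)) ≠ 0 := Finset.prod_ne_zero_iff.mpr fun j _ => hΓNj j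
    generalize (∏ j : Fin Kp, Real.Gamma ((Nj j : ℝ) + α / K)) = A
    field_simp
    rw [div_pow, mul_assoc (p K * A), div_mul_cancel₀ _ (pow_ne_zero _ hK0)]
    ring
  · simp [hK]
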